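/- InfoNCE-type bound on mutual information (unconditional special case): let (X, Y) be finite random variables with strictly positive joint distribution and f : X × Y → ℝ any function. For K ≥ 1, with (x¹,y¹) ∼ p(x,y) and x²,…,x^K i.i.d. ∼ p(x), I(X; Y) ≥ E[ log( e^{f(x¹,y¹)} / ( (1/K)·Σ_{i=1}^K e^{f(x^i,y¹)} ) ) ]. -/

import Mathlib

open Finset


lemma update_sum_eq {X : Type} [Fintype X] {m : ℕ} (F : X → ℝ) (i : Fin m)
    (x : X) (v : Fin m → X) :
    F (v i) + ∑ j, F (Function.update v i x j) = F x + ∑ j, F (v j) := by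
  have h1 : ∑ j, F (Function.update v i x j)
      = F x + ∑ j ∈ univ \ {i}, F (v j) := by
    have h : (fun j => F (Function.update v i x j))
        = Function.update (F ∘ v) i (F x) := by
      funext j
      simp only [Function.update, Function.comp]
      split <;> simp_all
    rw [h, Finset.sum_update_of_mem (mem_univ i)]
    simp [Function.comp]
  have h2 : ∑ j, F (v j) = F (v i) + ∑ j ∈ univ \ {i}, F (v j) := by
    rw [Finset.sdiff_singleton_eq_erase, ← Finset.sum_erase_add univ _ (mem_univ i)]
    ring
  rw [h1, h2]; ring

lemma update_prod_eq {X : Type} [Fintype X] {m : ℕ} (F : X → ℝ) (i : Fin m)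
    (x : X) (v : Fin m → X) :
    F (v i) * ∏ j, F (Function.update v i x j) = F x * ∏ j, F (v j) := by
  have h1 : ∏ j, F (Function.update v i x j)
      = F x * ∏ j ∈ univ \ {i}, F (v j) := by
    have h : (fun j => F (Function.update v i x j))
        = Function.update (F ∘ v) i (F x) := by
      funext j
      simp only [Function.update, Function.comp]
      split <;> simp_all
    rw [h, Finset.prod_update_of_mem (mem_univ i)]
    simp [Function.comp]
  have h2 : ∏ j, F (v j) = F (v i) * ∏ j ∈ univ \ {i}, F (v j) := by
    rw [Finset.sdiff_singleton_eq_erase, ← Finset.prod_erase_mul univ _ (mem_univ i)]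
    ring
  rw [h1, h2]; ring

def swapEquiv (X : Type) (m : ℕ) (i : Fin m) :
    X × (Fin m → X) ≃ X × (Fin m → X) where
  toFun q := (q.2 i, Function.update q.2 i q.1)
  invFun q := (q.2 i, Function.update q.2 i q.1)
  left_inv q := by simp [Function.update_idem]
  right_inv q := by simp [Function.update_idem]

lemma swap_eq {X : Type} [Fintype X] {m : ℕ} (w E : X → ℝ) (i : Fin m) :
    ∑ x, ∑ v : Fin m → X,
      (w x * ∏ j, w (v j)) * (E (v i) / (E x + ∑ j, E (v j)))
    = ∑ x, ∑ v : Fin m → X,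
      (w x * ∏ j, w (v j)) * (E x / (E x + ∑ j, E (v j))) := by
  have key : ∑ q : X × (Fin m → X),
      (w q.1 * ∏ j, w (q.2 j)) * (E (q.2 i) / (E q.1 + ∑ j, E (q.2 j)))
      = ∑ q : X × (Fin m → X),
      (w q.1 * ∏ j, w (q.2 j)) * (E q.1 / (E q.1 + ∑ j, E (q.2 j))) := by
    refine Fintype.sum_equiv (swapEquiv X m i)
      (fun q : X × (Fin m → X) =>
        (w q.1 * ∏ j, w (q.2 j)) * (E (q.2 i) / (E q.1 + ∑ j, E (q.2 j))))
      (fun q : X × (Fin m → X) =>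
        (w q.1 * ∏ j, w (q.2 j)) * (E q.1 / (E q.1 + ∑ j, E (q.2 j)))) ?_
    · rintro ⟨x, v⟩
      simp only [swapEquiv, Equiv.coe_fn_mk]
      rw [show (w (v i) * ∏ j, w (Function.update v i x j)) = w x * ∏ j, w (v j)
        from update_prod_eq w i x v,
        show (E (v i) + ∑ j, E (Function.update v i x j)) = E x + ∑ j, E (v j)
        from update_sum_eq E i x v]
  rw [Fintype.sum_prod_type, Fintype.sum_prod_type] at key
  exact key

lemma T_eq {X : Type} [Fintype X] (m : ℕ) (w E : X → ℝ) (hw : ∑ x, w x = 1)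
    (hE : ∀ x, 0 < E x) :
    ∑ x, ∑ v : Fin m → X, (w x * ∏ j, w (v j)) * (E x / (E x + ∑ j, E (v j)))
    = 1 / ((m : ℝ) + 1) := by
  have hS : ∀ (x : X) (v : Fin m → X), 0 < E x + ∑ j, E (v j) := fun x v =>
    add_pos_of_pos_of_nonneg (hE x) (Finset.sum_nonneg fun j _ => (hE _).le)
  have hW : ∑ x, ∑ v : Fin m → X, (w x * ∏ j, w (v j)) = 1 := by
    have h1 : ∑ v : Fin m → X, ∏ j, w (v j) = 1 := by
      have h2 := Finset.prod_univ_sum (fun _ : Fin m => (univ : Finset X))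
        (fun _ x => w x)
      rw [Fintype.piFinset_univ] at h2
      rw [← h2, hw, Finset.prod_const_one]
    calc ∑ x, ∑ v : Fin m → X, (w x * ∏ j, w (v j))
        = ∑ x, w x * ∑ v : Fin m → X, ∏ j, w (v j) := by
          simp [Finset.mul_sum]
      _ = 1 := by rw [h1]; simpa using hw
  set T := ∑ x, ∑ v : Fin m → X,
    (w x * ∏ j, w (v j)) * (E x / (E x + ∑ j, E (v j))) with hT
  have hmain : ((m : ℝ) + 1) * T = 1 := by
    have hpt : ∀ (x : X) (v : Fin m → X),
        (w x * ∏ j, w (v j)) * (E x / (E x + ∑ j, E (v j)))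
        + ∑ i : Fin m, (w x * ∏ j, w (v j)) * (E (v i) / (E x + ∑ j, E (v j)))
        = (w x * ∏ j, w (v j)) := by
      intro x v
      rw [← Finset.mul_sum, ← Finset.sum_div]
      have h3 : E x / (E x + ∑ j, E (v j)) + (∑ j, E (v j)) / (E x + ∑ j, E (v j))
          = 1 := by
        rw [← add_div, div_self (hS x v).ne']
      calc (w x * ∏ j, w (v j)) * (E x / (E x + ∑ j, E (v j)))
          + (w x * ∏ j, w (v j)) * ((∑ j, E (v j)) / (E x + ∑ j, E (v j)))
          = (w x * ∏ j, w (v j)) * (E x / (E x + ∑ j, E (v j))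
            + (∑ j, E (v j)) / (E x + ∑ j, E (v j))) := by ring
        _ = (w x * ∏ j, w (v j)) := by rw [h3, mul_one]
    calc ((m : ℝ) + 1) * T = T + ∑ _i : Fin m, T := by
            rw [Finset.sum_const, Finset.card_univ, Fintype.card_fin, nsmul_eq_mul]
            ring
      _ = T + ∑ i : Fin m, ∑ x, ∑ v : Fin m → X,
          (w x * ∏ j, w (v j)) * (E (v i) / (E x + ∑ j, E (v j))) := by
        refine congrArg (T + ·) (Finset.sum_congr rfl fun i _ => ?_)
        exact (swap_eq w E i).symm
      _ = T + ∑ x, ∑ v : Fin m → X, ∑ i : Fin m,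
          (w x * ∏ j, w (v j)) * (E (v i) / (E x + ∑ j, E (v j))) := by
        rw [Finset.sum_comm]
        exact congrArg (T + ·) (Finset.sum_congr rfl fun x _ => Finset.sum_comm)
      _ = ∑ x, ∑ v : Fin m → X,
          ((w x * ∏ j, w (v j)) * (E x / (E x + ∑ j, E (v j)))
            + ∑ i : Fin m, (w x * ∏ j, w (v j)) * (E (v i) / (E x + ∑ j, E (v j)))) := by
        rw [hT, ← Finset.sum_add_distrib]
        exact Finset.sum_congr rfl fun x _ => (Finset.sum_add_distrib).symm
      _ = ∑ x, ∑ v : Fin m → X, (w x * ∏ j, w (v j)) := by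
        exact Finset.sum_congr rfl fun x _ =>
          Finset.sum_congr rfl fun v _ => hpt x v
      _ = 1 := hW
  have hne : ((m : ℝ) + 1) ≠ 0 := by positivity
  rw [eq_div_iff hne]
  linarith

lemma log_step (c d A r : ℝ) (hc : 0 < c) (hd : 0 < d) (hA : 0 < A) (hr : 0 < r)
    (h : r / A = c / d) : c * Real.log A ≤ c * Real.log r - c + d := by
  have h1 : Real.log (d / c) ≤ d / c - 1 := Real.log_le_sub_one_of_pos (by positivity)
  have h2 : Real.log A = Real.log r + Real.log (d / c) := by
    have h3 : Real.log (r / A) = Real.log (c / d) := by rw [h]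
    rw [Real.log_div hr.ne' hA.ne', Real.log_div hc.ne' hd.ne'] at h3
    rw [Real.log_div hd.ne' hc.ne']
    linarith
  rw [h2]
  have h4 : c * (d / c - 1) = d - c := by field_simp
  nlinarith [mul_le_mul_of_nonneg_left h1 hc.le]

lemma const_mul_sum2 {α β : Type} [Fintype α] [Fintype β] (a k : ℝ) (g : α → β → ℝ) :
    ∑ x : α, ∑ v : β, a * (k * g x v) = a * (k * ∑ x : α, ∑ v : β, g x v) := by
  simp [Finset.mul_sum]

theorem infoNCE_lower_bound {X Y : Type} [Fintype X] [Fintype Y]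
    (p : X → Y → ℝ) (hp : ∀ x y, 0 < p x y) (hp1 : ∑ x, ∑ y, p x y = 1)
    (f : X → Y → ℝ) (K : ℕ) (hK : 1 ≤ K) :
    ∑ x1, ∑ y1, p x1 y1 *
      (∑ xs : Fin (K - 1) → X,
        (∏ i, (∑ y, p (xs i) y)) *
        Real.log (Real.exp (f x1 y1) /
          ((1 / (K : ℝ)) *
            (Real.exp (f x1 y1) + ∑ i, Real.exp (f (xs i) y1))))) ≤
      ∑ x, ∑ y, p x y * Real.log (p x y / ((∑ y', p x y') * (∑ x', p x' y))) := by
  rcases isEmpty_or_nonempty X with hX | hX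
  · rw [Finset.univ_eq_empty, Finset.sum_empty] at hp1
    norm_num at hp1
  rcases isEmpty_or_nonempty Y with hY | hY
  · have h0 : (∑ x : X, ∑ y : Y, p x y) = 0 :=
      Finset.sum_eq_zero fun x _ => by rw [Finset.univ_eq_empty, Finset.sum_empty]
    rw [h0] at hp1
    norm_num at hp1
  have hKpos : (0 : ℝ) < (K : ℝ) := by
    exact_mod_cast Nat.lt_of_lt_of_le Nat.zero_lt_one hK
  have hKm : (K : ℝ) = ((K - 1 : ℕ) : ℝ) + 1 := by
    have h := Nat.succ_pred_eq_of_pos (Nat.lt_of_lt_of_le Nat.zero_lt_one hK)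
    conv_lhs => rw [← h]
    push_cast [Nat.pred_eq_sub_one]
    ring
  have hpX : ∀ x, 0 < ∑ y, p x y := fun x =>
    Finset.sum_pos (fun y _ => hp x y) Finset.univ_nonempty
  have hpY : ∀ y, 0 < ∑ x, p x y := fun y =>
    Finset.sum_pos (fun x _ => hp x y) Finset.univ_nonempty
  have hpY1 : ∑ y, ∑ x, p x y = 1 := by rw [Finset.sum_comm]; exact hp1
  have hWpos : ∀ xs : Fin (K - 1) → X, 0 < ∏ i, ∑ y, p (xs i) y := fun xs =>
    Finset.prod_pos fun i _ => hpX _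
  have hW1 : ∑ xs : Fin (K - 1) → X, ∏ i, ∑ y, p (xs i) y = 1 := by
    have h2 := Finset.prod_univ_sum (fun _ : Fin (K - 1) => (univ : Finset X))
      (fun _ x => ∑ y, p x y)
    rw [Fintype.piFinset_univ] at h2
    rw [← h2, hp1, Finset.prod_const_one]
  have hSpos : ∀ (x1 : X) (y1 : Y) (xs : Fin (K - 1) → X),
      0 < Real.exp (f x1 y1) + ∑ i, Real.exp (f (xs i) y1) := by
    intro x1 y1 xs
    positivity
  have hsum_c : ∀ (x1 : X) (y1 : Y) (c : ℝ),
      ∑ xs : Fin (K - 1) → X, (p x1 y1 * ∏ i, ∑ y, p (xs i) y) * c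
        = p x1 y1 * c := by
    intro x1 y1 c
    rw [← Finset.sum_mul, ← Finset.mul_sum, hW1, mul_one]
  -- the pointwise bound
  have bound : ∀ (x1 : X) (y1 : Y) (xs : Fin (K - 1) → X),
      (p x1 y1 * ∏ i, ∑ y, p (xs i) y) *
        Real.log (Real.exp (f x1 y1) /
          ((1 / (K : ℝ)) * (Real.exp (f x1 y1) + ∑ i, Real.exp (f (xs i) y1))))
      ≤ (p x1 y1 * ∏ i, ∑ y, p (xs i) y) *
          Real.log (p x1 y1 / ((∑ y', p x1 y') * (∑ x', p x' y1)))
        - (p x1 y1 * ∏ i, ∑ y, p (xs i) y)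
        + (∑ x', p x' y1) * (((K : ℝ)) *
            (((∑ y', p x1 y') * ∏ i, ∑ y, p (xs i) y) *
              (Real.exp (f x1 y1) /
                (Real.exp (f x1 y1) + ∑ i, Real.exp (f (xs i) y1))))) := by
    intro x1 y1 xs
    refine log_step _ _ _ _ (mul_pos (hp x1 y1) (hWpos xs)) ?_ ?_ ?_ ?_
    · exact mul_pos (hpY y1) (mul_pos hKpos (mul_pos
        (mul_pos (hpX x1) (hWpos xs))
        (div_pos (Real.exp_pos _) (hSpos x1 y1 xs))))
    · exact div_pos (Real.exp_pos _)
        (mul_pos (by positivity) (hSpos x1 y1 xs))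
    · exact div_pos (hp x1 y1) (mul_pos (hpX x1) (hpY y1))
    · have h1 : (Real.exp (f x1 y1) + ∑ i, Real.exp (f (xs i) y1)) ≠ 0 :=
        (hSpos x1 y1 xs).ne'
      have h2 : (∑ y', p x1 y') ≠ 0 := (hpX x1).ne'
      have h3 : (∑ x', p x' y1) ≠ 0 := (hpY y1).ne'
      have h4 : (∏ i, ∑ y, p (xs i) y) ≠ 0 := (hWpos xs).ne'
      have h5 : Real.exp (f x1 y1) ≠ 0 := (Real.exp_pos _).ne'
      have h6 : (K : ℝ) ≠ 0 := hKpos.ne'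
      field_simp
  calc ∑ x1, ∑ y1, p x1 y1 *
      (∑ xs : Fin (K - 1) → X,
        (∏ i, (∑ y, p (xs i) y)) *
        Real.log (Real.exp (f x1 y1) /
          ((1 / (K : ℝ)) *
            (Real.exp (f x1 y1) + ∑ i, Real.exp (f (xs i) y1)))))
      = ∑ x1, ∑ y1, ∑ xs : Fin (K - 1) → X,
          (p x1 y1 * ∏ i, ∑ y, p (xs i) y) *
          Real.log (Real.exp (f x1 y1) /
            ((1 / (K : ℝ)) *
              (Real.exp (f x1 y1) + ∑ i, Real.exp (f (xs i) y1)))) := by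
        refine Finset.sum_congr rfl fun x1 _ => Finset.sum_congr rfl fun y1 _ => ?_
        rw [Finset.mul_sum]
        exact Finset.sum_congr rfl fun xs _ => by ring
    _ ≤ ∑ x1, ∑ y1, ∑ xs : Fin (K - 1) → X,
          ((p x1 y1 * ∏ i, ∑ y, p (xs i) y) *
            Real.log (p x1 y1 / ((∑ y', p x1 y') * (∑ x', p x' y1)))
          - (p x1 y1 * ∏ i, ∑ y, p (xs i) y)
          + (∑ x', p x' y1) * (((K : ℝ)) *
              (((∑ y', p x1 y') * ∏ i, ∑ y, p (xs i) y) *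
                (Real.exp (f x1 y1) /
                  (Real.exp (f x1 y1) + ∑ i, Real.exp (f (xs i) y1)))))) := by
        exact Finset.sum_le_sum fun x1 _ => Finset.sum_le_sum fun y1 _ =>
          Finset.sum_le_sum fun xs _ => bound x1 y1 xs
    _ = (∑ x1, ∑ y1, ∑ xs : Fin (K - 1) → X,
          (p x1 y1 * ∏ i, ∑ y, p (xs i) y) *
            Real.log (p x1 y1 / ((∑ y', p x1 y') * (∑ x', p x' y1))))
        - (∑ x1, ∑ y1, ∑ xs : Fin (K - 1) → X,
            p x1 y1 * ∏ i, ∑ y, p (xs i) y)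
        + (∑ x1, ∑ y1, ∑ xs : Fin (K - 1) → X,
            (∑ x', p x' y1) * (((K : ℝ)) *
              (((∑ y', p x1 y') * ∏ i, ∑ y, p (xs i) y) *
                (Real.exp (f x1 y1) /
                  (Real.exp (f x1 y1) + ∑ i, Real.exp (f (xs i) y1)))))) := by
        simp only [Finset.sum_add_distrib, Finset.sum_sub_distrib]
    _ = ∑ x, ∑ y, p x y * Real.log (p x y / ((∑ y', p x y') * (∑ x', p x' y))) := by
        have hS1 : (∑ x1, ∑ y1, ∑ xs : Fin (K - 1) → X,
            (p x1 y1 * ∏ i, ∑ y, p (xs i) y) *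
              Real.log (p x1 y1 / ((∑ y', p x1 y') * (∑ x', p x' y1))))
            = ∑ x, ∑ y, p x y *
                Real.log (p x y / ((∑ y', p x y') * (∑ x', p x' y))) :=
          Finset.sum_congr rfl fun x1 _ => Finset.sum_congr rfl fun y1 _ =>
            hsum_c x1 y1 _
        have hS2 : (∑ x1, ∑ y1, ∑ xs : Fin (K - 1) → X,
            p x1 y1 * ∏ i, ∑ y, p (xs i) y) = 1 := by
          have h7 : ∀ (x1 : X) (y1 : Y),
              (∑ xs : Fin (K - 1) → X, p x1 y1 * ∏ i, ∑ y, p (xs i) y)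
                = p x1 y1 := by
            intro x1 y1
            rw [← Finset.mul_sum, hW1, mul_one]
          calc ∑ x1, ∑ y1, ∑ xs : Fin (K - 1) → X, p x1 y1 * ∏ i, ∑ y, p (xs i) y
              = ∑ x1, ∑ y1, p x1 y1 :=
                Finset.sum_congr rfl fun x1 _ => Finset.sum_congr rfl fun y1 _ =>
                  h7 x1 y1
            _ = 1 := hp1
        have hS3 : (∑ x1, ∑ y1, ∑ xs : Fin (K - 1) → X,
            (∑ x', p x' y1) * (((K : ℝ)) *
              (((∑ y', p x1 y') * ∏ i, ∑ y, p (xs i) y) *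
                (Real.exp (f x1 y1) /
                  (Real.exp (f x1 y1) + ∑ i, Real.exp (f (xs i) y1)))))) = 1 := by
          rw [Finset.sum_comm]
          have hy : ∀ y1 : Y,
              (∑ x1, ∑ xs : Fin (K - 1) → X,
                (∑ x', p x' y1) * (((K : ℝ)) *
                  (((∑ y', p x1 y') * ∏ i, ∑ y, p (xs i) y) *
                    (Real.exp (f x1 y1) /
                      (Real.exp (f x1 y1) + ∑ i, Real.exp (f (xs i) y1))))))
                = ∑ x', p x' y1 := by
            intro y1
            have hT : (∑ x1, ∑ xs : Fin (K - 1) → X,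
                ((∑ y', p x1 y') * ∏ i, ∑ y, p (xs i) y) *
                  (Real.exp (f x1 y1) /
                    (Real.exp (f x1 y1) + ∑ i, Real.exp (f (xs i) y1))))
                = 1 / (((K - 1 : ℕ) : ℝ) + 1) := by
              have h8 := T_eq (K - 1) (fun x => ∑ y, p x y)
                (fun x => Real.exp (f x y1)) hp1 (fun x => Real.exp_pos _)
              simpa using h8
            rw [const_mul_sum2 (∑ x', p x' y1) ((K : ℝ))
              (fun (x1 : X) (xs : Fin (K - 1) → X) =>
                ((∑ y', p x1 y') * ∏ i, ∑ y, p (xs i) y) *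
                (Real.exp (f x1 y1) /
                  (Real.exp (f x1 y1) + ∑ i, Real.exp (f (xs i) y1)))),
              hT, ← hKm, mul_one_div, div_self hKpos.ne', mul_one]
          calc ∑ y1, ∑ x1, ∑ xs : Fin (K - 1) → X,
              (∑ x', p x' y1) * (((K : ℝ)) *
                (((∑ y', p x1 y') * ∏ i, ∑ y, p (xs i) y) *
                  (Real.exp (f x1 y1) /
                    (Real.exp (f x1 y1) + ∑ i, Real.exp (f (xs i) y1)))))
              = ∑ y1, ∑ x', p x' y1 :=
                Finset.sum_congr rfl fun y1 _ => hy y1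
            _ = 1 := hpY1
        rw [hS1, hS2, hS3]
        ring
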